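/- For the monomial z^k on l¹, its sup norm over the closed unit ball equals k^k / ‖k‖^‖k‖, i.e., sup_{‖z‖₁ ≤ 1} |z₁^{k₁} ⋯ z_n^{k_n}| = (∏ᵢ kᵢ^{kᵢ}) / (∑ᵢ kᵢ)^{∑ᵢ kᵢ}. -/

import Mathlib

open scoped BigOperators
open Finset

lemma amgm_nat (s : Finset ℕ) (k : ℕ → ℕ) (f : ℕ → ℝ) (hk : ∀ n ∈ s, 0 < k n)
    (hf : ∀ n ∈ s, 0 ≤ f n) (hsum : ∑ n ∈ s, f n ≤ 1) (hS : 0 < ∑ n ∈ s, k n) :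
    ∏ n ∈ s, f n ^ k n ≤
      (∏ n ∈ s, (k n : ℝ) ^ k n) / ((∑ n ∈ s, k n : ℕ) : ℝ) ^ (∑ n ∈ s, k n) := by
  set S : ℕ := ∑ n ∈ s, k n with hSdef
  have hS0 : (0:ℝ) < (S:ℝ) := by exact_mod_cast hS
  have key := Real.geom_mean_le_arith_mean_weighted s (fun n => (k n : ℝ) / S)
      (fun n => f n * S / k n)
      (fun n hn => by positivity)
      (by rw [← Finset.sum_div, ← Nat.cast_sum, ← hSdef, div_self hS0.ne'])
      (fun n hn => by have := hf n hn; positivity)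
  have hrhs : ∑ n ∈ s, (k n : ℝ) / S * (f n * S / k n) = ∑ n ∈ s, f n := by
    refine Finset.sum_congr rfl fun n hn => ?_
    have hkn : (k n : ℝ) ≠ 0 := by exact_mod_cast (hk n hn).ne'
    field_simp
  rw [hrhs] at key
  have key2 : ∏ n ∈ s, (f n * S / k n) ^ (k n : ℝ) ≤ 1 := by
    have hkey : ∏ n ∈ s, (f n * S / k n) ^ ((k n : ℝ)/S) ≤ 1 := key.trans hsum
    have := Real.rpow_le_rpow
      (Finset.prod_nonneg fun n hn => Real.rpow_nonneg (by have := hf n hn; positivity) _)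
      hkey (le_of_lt hS0)
    rw [Real.one_rpow, ← Real.finset_prod_rpow _ _
      (fun n hn => Real.rpow_nonneg (by have := hf n hn; positivity) _)] at this
    calc ∏ n ∈ s, (f n * S / k n) ^ (k n : ℝ)
        = ∏ n ∈ s, ((f n * S / k n) ^ ((k n : ℝ)/S)) ^ (S:ℝ) := by
          refine Finset.prod_congr rfl fun n hn => ?_
          rw [← Real.rpow_mul (by have := hf n hn; positivity)]
          congr 1
          field_simp
      _ ≤ 1 := this
  have hfk : ∀ n ∈ s, f n ^ k n = (f n * S / k n) ^ (k n:ℕ) * ((k n : ℝ)/S) ^ (k n:ℕ) := by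
    intro n hn
    have hkn : (k n : ℝ) ≠ 0 := by exact_mod_cast (hk n hn).ne'
    rw [← mul_pow]
    congr 1
    field_simp
  calc ∏ n ∈ s, f n ^ k n
      = (∏ n ∈ s, (f n * S / k n) ^ (k n:ℕ)) * ∏ n ∈ s, ((k n : ℝ)/S) ^ (k n:ℕ) := by
        rw [← Finset.prod_mul_distrib]; exact Finset.prod_congr rfl hfk
    _ ≤ 1 * ∏ n ∈ s, ((k n : ℝ)/S) ^ (k n:ℕ) := by
        refine mul_le_mul_of_nonneg_right ?_ ?_
        · calc ∏ n ∈ s, (f n * S / k n) ^ (k n:ℕ)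
              = ∏ n ∈ s, (f n * S / k n) ^ (k n : ℝ) := by
                refine Finset.prod_congr rfl fun n hn => ?_
                rw [Real.rpow_natCast]
            _ ≤ 1 := key2
        · exact Finset.prod_nonneg fun n hn => by positivity
    _ = (∏ n ∈ s, (k n : ℝ) ^ k n) / (S : ℝ) ^ S := by
        rw [one_mul]
        simp_rw [div_pow]
        rw [Finset.prod_div_distrib]
        congr 1
        rw [Finset.prod_pow_eq_pow_sum]

theorem monomial_sup_norm (k : ℕ →₀ ℕ) :
    sSup {r : ℝ | ∃ z : lp (fun _ : ℕ => ℂ) 1, ‖z‖ ≤ 1 ∧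
        r = ‖∏ n ∈ k.support, (z n) ^ k n‖} =
      (∏ n ∈ k.support, (k n : ℝ) ^ k n) /
        ((k.sum fun _ v => v : ℕ) : ℝ) ^ (k.sum fun _ v => v : ℕ) := by
  have hSsum : (k.sum fun _ v => v) = ∑ n ∈ k.support, k n := rfl
  rw [hSsum]
  rcases Finset.eq_empty_or_nonempty k.support with hs | hs
  · have hset : {r : ℝ | ∃ z : lp (fun _ : ℕ => ℂ) 1, ‖z‖ ≤ 1 ∧
        r = ‖∏ n ∈ k.support, (z n) ^ k n‖} = {1} := by
      ext r
      simp only [hs, Finset.prod_empty, norm_one, Set.mem_setOf_eq, Set.mem_singleton_iff]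
      constructor
      · rintro ⟨z, _, hr⟩; exact hr
      · rintro rfl; exact ⟨0, by simp, rfl⟩
    rw [hset, csSup_singleton, hs]
    simp
  · have hk : ∀ n ∈ k.support, 0 < k n :=
      fun n hn => Nat.pos_of_ne_zero (Finsupp.mem_support_iff.mp hn)
    have hS : 0 < ∑ n ∈ k.support, k n := by
      obtain ⟨n, hn⟩ := hs
      exact Finset.sum_pos' (fun i _ => Nat.zero_le _) ⟨n, hn, hk n hn⟩
    have hS0 : (0:ℝ) < ((∑ n ∈ k.support, k n : ℕ) : ℝ) := by exact_mod_cast hS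
    set M : ℝ := (∏ n ∈ k.support, (k n : ℝ) ^ k n) /
      ((∑ n ∈ k.support, k n : ℕ) : ℝ) ^ (∑ n ∈ k.support, k n) with hMdef
    have hub : ∀ r ∈ {r : ℝ | ∃ z : lp (fun _ : ℕ => ℂ) 1, ‖z‖ ≤ 1 ∧
        r = ‖∏ n ∈ k.support, (z n) ^ k n‖}, r ≤ M := by
      rintro r ⟨z, hz, rfl⟩
      have hsummable : Summable fun n => ‖z n‖ := by
        have := (lp.memℓp z).summable (p := 1) (by norm_num)
        simpa using this
      have hnorm : ‖z‖ = ∑' n, ‖z n‖ := by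
        rw [lp.norm_eq_tsum_rpow (by norm_num) z]
        simp
      have hsum1 : ∑ n ∈ k.support, ‖z n‖ ≤ 1 := by
        calc ∑ n ∈ k.support, ‖z n‖ = ∑ n ∈ k.support, ‖z n‖ := by
              simp
          _ ≤ ∑' n, ‖z n‖ := Summable.sum_le_tsum k.support (fun n _ => norm_nonneg _) hsummable
          _ = ‖z‖ := hnorm.symm
          _ ≤ 1 := hz
      have hmain := amgm_nat k.support k (fun n => ‖z n‖) hk
        (fun n _ => norm_nonneg _) hsum1 hS
      calc ‖∏ n ∈ k.support, (z n) ^ k n‖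
          = ∏ n ∈ k.support, ‖z n‖ ^ k n := by
            rw [norm_prod]; exact Finset.prod_congr rfl fun n _ => norm_pow _ _
        _ ≤ M := hmain
    have hmem : M ∈ {r : ℝ | ∃ z : lp (fun _ : ℕ => ℂ) 1, ‖z‖ ≤ 1 ∧
        r = ‖∏ n ∈ k.support, (z n) ^ k n‖} := by
      set g : ℕ → ℂ := fun n => (((k n : ℝ) / (∑ n ∈ k.support, k n : ℕ) : ℝ) : ℂ) with hgdef
      have hg0 : ∀ n ∉ k.support, g n = 0 := by
        intro n hn
        have : k n = 0 := Finsupp.notMem_support_iff.mp hn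
        simp [hgdef, this]
      have hg : Memℓp g 1 := by
        apply memℓp_gen
        apply summable_of_ne_finset_zero (s := k.support)
        intro n hn
        simp [hg0 n hn]
      refine ⟨⟨g, hg⟩, ?_, ?_⟩
      · have hnorm : ‖(⟨g, hg⟩ : lp (fun _ : ℕ => ℂ) 1)‖ = ∑' n, ‖g n‖ := by
          rw [lp.norm_eq_tsum_rpow (by norm_num)]
          simp
        rw [hnorm, tsum_eq_sum (f := fun n => ‖g n‖) (s := k.support)
          (fun n hn => by simp [hg0 n hn])]
        have heq : ∑ n ∈ k.support, ‖g n‖ =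
            ∑ n ∈ k.support, (k n : ℝ) / (∑ n ∈ k.support, k n : ℕ) := by
          refine Finset.sum_congr rfl fun n hn => ?_
          simp only [hgdef, Complex.norm_real, Real.norm_eq_abs]
          exact abs_of_nonneg (by positivity)
        rw [heq, ← Finset.sum_div, ← Nat.cast_sum, div_self hS0.ne']
      · have hcoe : ∀ n, ((⟨g, hg⟩ : lp (fun _ : ℕ => ℂ) 1) n) = g n := fun n => rfl
        calc M = ‖
              (((∏ n ∈ k.support, ((k n : ℝ) / (∑ n ∈ k.support, k n : ℕ)) ^ k n : ℝ)) : ℂ)‖ := by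
              rw [Complex.norm_real, Real.norm_eq_abs, abs_of_nonneg (Finset.prod_nonneg fun n _ => by positivity)]
              rw [hMdef]
              simp_rw [div_pow]
              rw [Finset.prod_div_distrib, Finset.prod_pow_eq_pow_sum]
          _ = ‖∏ n ∈ k.support, ((⟨g, hg⟩ : lp (fun _ : ℕ => ℂ) 1) n) ^ k n‖ := by
              congr 1
              push_cast
              refine Finset.prod_congr rfl fun n hn => ?_
              simp only [hcoe, hgdef]
              push_cast
              ring
    exact le_antisymm (csSup_le ⟨M, hmem⟩ hub) (le_csSup ⟨M, hub⟩ hmem)
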